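/- Utilitarian PoC of a star with n agents, lower bound: let G be a star on m = c(n−1) + d + 1 vertices (c ≥ 1, 0 ≤ d ≤ n−2). In the instance where one agent values the center at 1, d agents each value c+1 distinct leaves at 1/(c+1) each, and n−1−d agents each value c distinct leaves at 1/c each, the unconstrained optimal utilitarian welfare is n, while the best connected allocation has utilitarian welfare exactly 1 + d/(c+1) + (n−d−1)/c. Hence the utilitarian PoC is at least nc(c+1)/(c² + 2nc + n − c − m). -/

import Mathlib

def ConnB {V : Type*} (G : SimpleGraph V) (s : Finset V) : Prop :=
  s = ∅ ∨ (G.induce (s : Set V)).Connected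

def IsAlloc {V : Type*} [Fintype V] [DecidableEq V] {n : ℕ} (A : Fin n → Finset V) : Prop :=
  (∀ i j : Fin n, i ≠ j → Disjoint (A i) (A j)) ∧ Finset.univ.biUnion A = Finset.univ

/-- The star on `m` vertices: vertex `0` is the center, adjacent to all other vertices. -/
def starGraph (m : ℕ) : SimpleGraph (Fin m) where
  Adj x y := x ≠ y ∧ (x.val = 0 ∨ y.val = 0)
  symm := ⟨by rintro x y ⟨h1, h2⟩; exact ⟨h1.symm, h2.symm⟩⟩
  loopless := ⟨by rintro x ⟨h1, _⟩; exact h1 rfl⟩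

lemma no_adj_eq {V : Type*} {H : SimpleGraph V} (h : ∀ a b, ¬ H.Adj a b) {a b : V}
    (hr : H.Reachable a b) : a = b := by
  obtain ⟨w⟩ := hr
  cases w with
  | nil => rfl
  | cons hadj _ => exact absurd hadj (h _ _)

lemma conn_card_le_one {m : ℕ} (s : Finset (Fin m)) (hc : ConnB (starGraph m) s)
    (h0 : ∀ v ∈ s, v.val ≠ 0) : s.card ≤ 1 := by
  by_contra hcard
  push_neg at hcard
  obtain ⟨x, hx, y, hy, hxy⟩ := Finset.one_lt_card.mp hcard
  rcases hc with hc | hc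
  · simp [hc] at hx
  · have hr : ((starGraph m).induce (s : Set (Fin m))).Reachable ⟨x, hx⟩ ⟨y, hy⟩ :=
      hc.preconnected _ _
    have : (⟨x, hx⟩ : (s : Set (Fin m))) = ⟨y, hy⟩ := by
      refine no_adj_eq ?_ hr
      rintro ⟨a, ha⟩ ⟨b, hb⟩ ⟨-, h⟩
      rcases h with h | h
      · exact h0 a ha h
      · exact h0 b hb h
    exact hxy (by simpa using congrArg Subtype.val this)

lemma conn_of_card_le_one {m : ℕ} (s : Finset (Fin m)) (h : s.card ≤ 1) :
    ConnB (starGraph m) s := by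
  interval_cases hcs : s.card
  · exact Or.inl (Finset.card_eq_zero.mp hcs)
  · obtain ⟨a, rfl⟩ := Finset.card_eq_one.mp hcs
    right
    haveI : Nonempty (({a} : Finset (Fin m)) : Set (Fin m)) := ⟨⟨a, by simp⟩⟩
    refine SimpleGraph.Connected.mk ?_
    intro x y
    have hx := x.2
    have hy := y.2
    simp only [Finset.coe_singleton, Set.mem_singleton_iff] at hx hy
    exact (by rw [Subtype.ext (hx.trans hy.symm)] : x = y) ▸ SimpleGraph.Reachable.refl _

lemma conn_of_zero_mem {m : ℕ} (hm : 0 < m) (s : Finset (Fin m))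
    (hz : (⟨0, hm⟩ : Fin m) ∈ s) : ConnB (starGraph m) s := by
  right
  set z : Fin m := ⟨0, hm⟩
  have hreach : ∀ x : (s : Set (Fin m)),
      ((starGraph m).induce (s : Set (Fin m))).Reachable x ⟨z, hz⟩ := by
    rintro ⟨a, ha⟩
    by_cases hcase : a = z
    · subst hcase; exact SimpleGraph.Reachable.refl _
    · exact SimpleGraph.Adj.reachable
        (by exact ⟨by simpa [Subtype.ext_iff] using hcase, Or.inr rfl⟩)
  haveI : Nonempty ((s : Set (Fin m))) := ⟨⟨z, hz⟩⟩
  exact SimpleGraph.Connected.mk (fun x y => (hreach x).trans (hreach y).symm)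

/-- for a star on `m = c(n−1) + d + 1` vertices (`c ≥ 1`, `0 ≤ d ≤ n−2`),
consider the instance where agent 0 values the center (vertex 0) at `1`, each of `d` agents
owns `c+1` distinct leaves valued at `1/(c+1)` each, and each of the remaining `n−1−d` agents
owns `c` distinct leaves valued at `1/c` each (ownership described by `owner`).  Then some
allocation has utilitarian welfare `n`, every connected allocation has utilitarian welfare at
most `E = 1 + d/(c+1) + (n−d−1)/c`, some connected allocation achieves exactly `E`, and
`n / E = nc(c+1)/(c² + 2nc + n − c − m)`.  Hence the utilitarian price of connectivity of the
star is at least `nc(c+1)/(c² + 2nc + n − c − m)`. -/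
theorem util_poc_star_lower (n c d m : ℕ) (hn : 2 ≤ n) (hc : 1 ≤ c) (hd : d ≤ n - 2)
    (hm : m = c * (n - 1) + d + 1)
    (owner : Fin m → Fin n)
    (howner0 : ∀ v : Fin m, v.val = 0 → (owner v).val = 0)
    (howner0' : ∀ v : Fin m, v.val ≠ 0 → (owner v).val ≠ 0)
    (hcount1 : ∀ i : Fin n, 1 ≤ i.val → i.val ≤ d →
      (Finset.univ.filter (fun v : Fin m => owner v = i)).card = c + 1)
    (hcount2 : ∀ i : Fin n, d < i.val →
      (Finset.univ.filter (fun v : Fin m => owner v = i)).card = c)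
    (u : Fin n → Fin m → ℝ)
    (hu : ∀ (i : Fin n) (v : Fin m),
      u i v = if owner v = i
        then (if i.val = 0 then (1 : ℝ)
          else if i.val ≤ d then ((c : ℝ) + 1)⁻¹ else ((c : ℝ))⁻¹)
        else 0) :
    (∃ A : Fin n → Finset (Fin m), IsAlloc A ∧ ∑ i, ∑ v ∈ A i, u i v = n) ∧
    (∀ B : Fin n → Finset (Fin m), IsAlloc B → (∀ i, ConnB (starGraph m) (B i)) →
      ∑ i, ∑ v ∈ B i, u i v ≤ 1 + (d : ℝ) / ((c : ℝ) + 1) + ((n : ℝ) - d - 1) / c) ∧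
    (∃ B : Fin n → Finset (Fin m), IsAlloc B ∧ (∀ i, ConnB (starGraph m) (B i)) ∧
      ∑ i, ∑ v ∈ B i, u i v = 1 + (d : ℝ) / ((c : ℝ) + 1) + ((n : ℝ) - d - 1) / c) ∧
    ((n : ℝ) / (1 + (d : ℝ) / ((c : ℝ) + 1) + ((n : ℝ) - d - 1) / c) =
      (n : ℝ) * c * ((c : ℝ) + 1) /
        ((c : ℝ) ^ 2 + 2 * (n : ℝ) * c + (n : ℝ) - (c : ℝ) - (m : ℝ))) := by
  classical
  have hn1 : 1 ≤ n := by omega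
  have hm0 : 0 < m := by omega
  have hdn : d + 2 ≤ n := by omega
  set z : Fin m := ⟨0, hm0⟩ with hzdef
  set za : Fin n := ⟨0, by omega⟩ with hzadef
  set val : Fin n → ℝ :=
    fun i => if i.val = 0 then 1 else if i.val ≤ d then ((c : ℝ) + 1)⁻¹ else (c : ℝ)⁻¹
    with hvaldef
  have hu' : ∀ i v, u i v = if owner v = i then val i else 0 := hu
  have hc0 : (0:ℝ) < c := by exact_mod_cast hc
  have hc1 : (0:ℝ) < (c:ℝ) + 1 := by linarith
  -- owner v = za ↔ v = z
  have hoz : ∀ v : Fin m, owner v = za ↔ v = z := by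
    intro v
    constructor
    · intro h
      by_contra hv
      have : v.val ≠ 0 := fun h0 => hv (Fin.ext h0)
      exact howner0' v this (by rw [h])
    · rintro rfl
      exact Fin.ext (howner0 z rfl)
  have howned0 : Finset.univ.filter (fun v : Fin m => owner v = za) = {z} := by
    ext v
    simp [hoz v]
  have hownedne : ∀ i : Fin n, i ≠ za →
      (Finset.univ.filter (fun v : Fin m => owner v = i)).Nonempty := by
    intro i hi
    have h1 : 1 ≤ i.val := by
      rcases Nat.eq_zero_or_pos i.val with h | h
      · exact absurd (Fin.ext h) hi
      · exact h
    rw [← Finset.card_pos]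
    by_cases hle : i.val ≤ d
    · rw [hcount1 i h1 hle]; omega
    · rw [hcount2 i (by omega)]; omega
  have hval_nonneg : ∀ i, 0 ≤ val i := by
    intro i
    simp only [hvaldef]
    split_ifs <;> positivity
  have hcne : (c:ℝ) ≠ 0 := ne_of_gt hc0
  have hc1ne : (c:ℝ) + 1 ≠ 0 := ne_of_gt hc1
  have hinv1 : ((c:ℝ)+1)⁻¹ ≤ 1 := by
    rw [inv_eq_one_div, div_le_one hc1]; linarith
  have hinv2 : ((c:ℝ))⁻¹ ≤ 1 := by
    rw [inv_eq_one_div, div_le_one hc0]; exact_mod_cast hc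
  have hval_le_one : ∀ i, val i ≤ 1 := by
    intro i
    simp only [hvaldef]
    split_ifs
    · exact le_refl 1
    · exact hinv1
    · exact hinv2
  have hsum : ∀ (i : Fin n) (s : Finset (Fin m)),
      ∑ v ∈ s, u i v = ((s.filter (fun v => owner v = i)).card : ℝ) * val i := by
    intro i s
    simp only [hu']
    rw [Finset.sum_ite, Finset.sum_const, Finset.sum_const_zero, add_zero, nsmul_eq_mul]
  have hcard_owned : ∀ i : Fin n,
      (((Finset.univ.filter (fun v : Fin m => owner v = i)).card : ℝ)) * val i = 1 := by
    intro i
    by_cases h0 : i = za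
    · subst h0
      rw [howned0]
      simp [hvaldef, hzadef]
    · have h1 : 1 ≤ i.val := by
        rcases Nat.eq_zero_or_pos i.val with h | h
        · exact absurd (Fin.ext h) h0
        · exact h
      by_cases hle : i.val ≤ d
      · rw [hcount1 i h1 hle]
        have : val i = ((c:ℝ)+1)⁻¹ := by
          simp only [hvaldef]; rw [if_neg (by omega), if_pos hle]
        rw [this]
        push_cast
        field_simp
      · rw [hcount2 i (by omega)]
        have : val i = ((c:ℝ))⁻¹ := by
          simp only [hvaldef]; rw [if_neg (by omega), if_neg hle]
        rw [this]
        field_simp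
  -- sum of val
  have hsumval : ∑ i : Fin n, val i
      = 1 + (d : ℝ) / ((c : ℝ) + 1) + ((n : ℝ) - d - 1) / c := by
    have h1 : ∑ i : Fin n, val i = ∑ k ∈ Finset.range n,
        (if k = 0 then (1:ℝ) else if k ≤ d then ((c : ℝ) + 1)⁻¹ else (c : ℝ)⁻¹) := by
      rw [← Fin.sum_univ_eq_sum_range]
    rw [h1, Finset.sum_ite, Finset.sum_ite]
    have e0 : (Finset.range n).filter (fun k => k = 0) = {0} := by
      ext k
      simp only [Finset.mem_filter, Finset.mem_range, Finset.mem_singleton]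
      omega
    have e1 : ((Finset.range n).filter (fun k => ¬ k = 0)).filter (fun k => k ≤ d)
        = Finset.Icc 1 d := by
      ext k
      simp only [Finset.mem_filter, Finset.mem_range, Finset.mem_Icc, Finset.mem_Ico]
      omega
    have e2 : ((Finset.range n).filter (fun k => ¬ k = 0)).filter (fun k => ¬ k ≤ d)
        = Finset.Ico (d+1) n := by
      ext k
      simp only [Finset.mem_filter, Finset.mem_range, Finset.mem_Icc, Finset.mem_Ico]
      omega
    rw [e0, e1, e2]
    simp only [Finset.sum_const, nsmul_eq_mul, Finset.card_singleton, Nat.card_Icc,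
      Nat.card_Ico, Nat.add_sub_cancel, Nat.cast_one]
    have hcast : ((n - (d+1) : ℕ) : ℝ) = (n:ℝ) - d - 1 := by
      rw [Nat.cast_sub (by omega)]; push_cast; ring
    rw [hcast]
    ring
  refine ⟨?_, ?_, ?_, ?_⟩
  · -- unconstrained allocation
    refine ⟨fun i => Finset.univ.filter (fun v => owner v = i), ⟨?_, ?_⟩, ?_⟩
    · intro i j hij
      rw [Finset.disjoint_left]
      intro v hv hv'
      simp only [Finset.mem_filter] at hv hv'
      exact hij (hv.2 ▸ hv'.2 ▸ rfl)
    · apply Finset.eq_univ_of_forall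
      intro v
      exact Finset.mem_biUnion.mpr
        ⟨owner v, Finset.mem_univ _, Finset.mem_filter.mpr ⟨Finset.mem_univ v, rfl⟩⟩
    · have : ∀ i : Fin n, ∑ v ∈ Finset.univ.filter (fun v => owner v = i), u i v = 1 := by
        intro i
        rw [hsum]
        rw [Finset.filter_true_of_mem (fun v hv => (Finset.mem_filter.mp hv).2)]
        exact hcard_owned i
      rw [Finset.sum_congr rfl (fun i _ => this i)]
      simp
  · -- upper bound for connected allocations
    intro B hB hconn
    obtain ⟨hdisj, hcover⟩ := hB
    have hzm : ∃ i, z ∈ B i := by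
      have : z ∈ Finset.univ.biUnion B := by rw [hcover]; exact Finset.mem_univ z
      simpa using this
    obtain ⟨i0, hi0⟩ := hzm
    have hnotmem : ∀ i, i ≠ i0 → z ∉ B i := by
      intro i hi hmem
      exact (Finset.disjoint_left.mp (hdisj i i0 hi) hmem) hi0
    have hb1 : ∑ v ∈ B i0, u i0 v ≤ 1 := by
      rw [hsum]
      calc (((B i0).filter (fun v => owner v = i0)).card : ℝ) * val i0
          ≤ ((Finset.univ.filter (fun v : Fin m => owner v = i0)).card : ℝ) * val i0 := by
            apply mul_le_mul_of_nonneg_right _ (hval_nonneg i0)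
            exact_mod_cast Finset.card_le_card
              (Finset.filter_subset_filter _ (Finset.subset_univ _))
        _ = 1 := hcard_owned i0
    have hb2 : ∀ i, i ≠ i0 →
        ∑ v ∈ B i, u i v ≤ (if i = za then 0 else val i) := by
      intro i hi
      rw [hsum]
      by_cases h0 : i = za
      · subst h0
        have he : (B za).filter (fun v => owner v = za) = ∅ := by
          rw [Finset.filter_eq_empty_iff]
          intro v hv hov
          exact hnotmem za hi (((hoz v).mp hov) ▸ hv)
        rw [he]
        simp
      · have hcard : ((B i).filter (fun v => owner v = i)).card ≤ 1 := by
          refine le_trans (Finset.card_le_card (Finset.filter_subset _ _)) ?_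
          refine conn_card_le_one (B i) (hconn i) ?_
          intro v hv hv0
          exact hnotmem i hi ((Fin.ext hv0 : v = z) ▸ hv)
        simp only [if_neg h0]
        calc (((B i).filter (fun v => owner v = i)).card : ℝ) * val i
            ≤ 1 * val i := by
              apply mul_le_mul_of_nonneg_right _ (hval_nonneg i)
              exact_mod_cast hcard
          _ = val i := one_mul _
    have hsplit : ∑ i, ∑ v ∈ B i, u i v
        = (∑ v ∈ B i0, u i0 v) + ∑ i ∈ Finset.univ.erase i0, ∑ v ∈ B i, u i v :=
      (Finset.add_sum_erase _ _ (Finset.mem_univ i0)).symm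
    have h2 : ∑ i ∈ Finset.univ.erase i0, ∑ v ∈ B i, u i v
        ≤ ∑ i ∈ Finset.univ.erase i0, (if i = za then 0 else val i) :=
      Finset.sum_le_sum (fun i hi => hb2 i (Finset.ne_of_mem_erase hi))
    have h3 : ∑ i ∈ Finset.univ.erase i0, (if i = za then 0 else val i)
        ≤ ∑ i : Fin n, (if i = za then 0 else val i) := by
      apply Finset.sum_le_sum_of_subset_of_nonneg (Finset.erase_subset _ _)
      intro i _ _
      split_ifs
      · exact le_refl 0
      · exact hval_nonneg i
    have h4 : ∑ i : Fin n, (if i = za then 0 else val i) = (∑ i, val i) - 1 := by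
      have hvza : val za = 1 := by simp [hvaldef, hzadef]
      have hpt : ∀ i : Fin n,
          (if i = za then (0:ℝ) else val i) = val i - (if i = za then 1 else 0) := by
        intro i
        split_ifs with h
        · rw [h, hvza]; ring
        · ring
      rw [Finset.sum_congr rfl (fun i _ => hpt i), Finset.sum_sub_distrib]
      have hone : ∑ i : Fin n, (if i = za then (1:ℝ) else 0) = 1 := by
        rw [Finset.sum_ite_eq' Finset.univ za (fun _ => (1:ℝ))]
        simp
      rw [hone]
    calc ∑ i, ∑ v ∈ B i, u i v
        ≤ 1 + ((∑ i, val i) - 1) := by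
          rw [hsplit]
          have := le_trans h2 h3
          linarith [hb1]
      _ = ∑ i, val i := by ring
      _ = 1 + (d : ℝ) / ((c : ℝ) + 1) + ((n : ℝ) - d - 1) / c := hsumval
  · -- optimal connected allocation
    set f : Fin n → Fin m := fun j =>
      if h : (Finset.univ.filter (fun v => owner v = j)).Nonempty then h.choose else z
      with hfdef
    have hf : ∀ j : Fin n, j ≠ za → owner (f j) = j := by
      intro j hj
      have hne := hownedne j hj
      simp only [hfdef, dif_pos hne]
      exact (Finset.mem_filter.mp hne.choose_spec).2
    have hfz : ∀ j : Fin n, j ≠ za → f j ≠ z := by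
      intro j hj h
      apply hj
      have h2 := hf j hj
      rw [h] at h2
      rw [← h2]
      exact (hoz z).mpr rfl
    set T : Finset (Fin m) := (Finset.univ.erase za).image f with hTdef
    set B : Fin n → Finset (Fin m) :=
      fun j => if j = za then Finset.univ \ T else {f j} with hBdef
    have hBza : B za = Finset.univ \ T := if_pos rfl
    have hBj : ∀ j : Fin n, j ≠ za → B j = {f j} := fun j hj => if_neg hj
    have hzB : z ∈ B za := by
      rw [hBza]
      simp only [Finset.mem_sdiff, Finset.mem_univ, true_and, hTdef, Finset.mem_image]
      rintro ⟨j, hj, hjz⟩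
      exact hfz j (Finset.ne_of_mem_erase hj) hjz
    refine ⟨B, ⟨?_, ?_⟩, ?_, ?_⟩
    · intro i j hij
      rw [Finset.disjoint_left]
      intro v hv hv'
      by_cases hi : i = za
      · subst hi
        have hj : j ≠ za := fun h => hij h.symm
        rw [hBza] at hv
        rw [hBj j hj, Finset.mem_singleton] at hv'
        rw [Finset.mem_sdiff] at hv
        exact hv.2 (hv' ▸ Finset.mem_image_of_mem f
          (Finset.mem_erase.mpr ⟨hj, Finset.mem_univ j⟩))
      · by_cases hj : j = za
        · subst hj
          rw [hBza] at hv'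
          rw [hBj i hi, Finset.mem_singleton] at hv
          rw [Finset.mem_sdiff] at hv'
          exact hv'.2 (hv ▸ Finset.mem_image_of_mem f
            (Finset.mem_erase.mpr ⟨hi, Finset.mem_univ i⟩))
        · rw [hBj i hi, Finset.mem_singleton] at hv
          rw [hBj j hj, Finset.mem_singleton] at hv'
          apply hij
          rw [← hf i hi, ← hf j hj, ← hv, ← hv']
    · apply Finset.eq_univ_of_forall
      intro v
      apply Finset.mem_biUnion.mpr
      by_cases hv : v ∈ T
      · rw [hTdef, Finset.mem_image] at hv
        obtain ⟨j, hj, rfl⟩ := hv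
        refine ⟨j, Finset.mem_univ j, ?_⟩
        rw [hBj j (Finset.ne_of_mem_erase hj)]
        exact Finset.mem_singleton_self _
      · refine ⟨za, Finset.mem_univ za, ?_⟩
        rw [hBza, Finset.mem_sdiff]
        exact ⟨Finset.mem_univ v, hv⟩
    · intro i
      by_cases hi : i = za
      · subst hi
        exact conn_of_zero_mem hm0 _ hzB
      · rw [hBj i hi]
        exact conn_of_card_le_one _ (by simp)
    · have hterm : ∀ i : Fin n, ∑ v ∈ B i, u i v = val i := by
        intro i
        rw [hsum]
        by_cases hi : i = za
        · subst hi
          have hfil : (B za).filter (fun v => owner v = za) = {z} := by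
            ext v
            simp only [Finset.mem_filter, hoz v, Finset.mem_singleton]
            constructor
            · rintro ⟨-, h⟩; exact h
            · rintro rfl; exact ⟨hzB, rfl⟩
          rw [hfil]
          have hvza : val za = 1 := by simp [hvaldef, hzadef]
          simp [hvza]
        · have hfil : (B i).filter (fun v => owner v = i) = {f i} := by
            rw [hBj i hi]
            rw [Finset.filter_singleton, if_pos (hf i hi)]
          rw [hfil]
          simp
      rw [Finset.sum_congr rfl (fun i _ => hterm i), hsumval]
  · -- algebra
    have hmr : (m:ℝ) = (c:ℝ) * ((n:ℝ) - 1) + d + 1 := by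
      rw [hm]
      push_cast [Nat.cast_sub (by omega : 1 ≤ n)]
      ring
    have hEeq : 1 + (d:ℝ)/((c:ℝ)+1) + ((n:ℝ)-d-1)/c
        = ((c:ℝ)^2 + n*c + n - d - 1) / ((c:ℝ)*((c:ℝ)+1)) := by
      field_simp
      ring
    have hDeq : (c:ℝ)^2 + 2*(n:ℝ)*c + n - c - m = (c:ℝ)^2 + n*c + n - d - 1 := by
      rw [hmr]; ring
    rw [hEeq, hDeq, div_div_eq_mul_div]
    ring
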